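/- Let D = ω_n⋯ω_1ω_0 be a semi-standard decomposition of u ∈ Y_{z,y} (with data y^{(i)}, J^{(i)} for 0 ≤ i ≤ n+1), and let 0 ≤ i_1 < i_2 < ⋯ < i_k ≤ n be exactly those indices i with [y^{(i+1)}] = [y^{(i)}] and J^{(i+1)} = J^{(i)}. Let D̂ = ω_{σ(n−k)}⋯ω_{σ(1)}ω_{σ(0)} be the expression obtained from D by deleting all factors ω_{i_j} (1 ≤ j ≤ k), where σ : {0,1,…,n−k} → {0,1,…,n} is the corresponding index map, and let û be the element of W expressed by D̂. Then there exists ẑ ∈ S^{(Λ)} with [ẑ] = [z] such that û ∈ Y_{ẑ,y}; D̂ is a semi-standard decomposition of û with respect to J^{(0)}(D̂) = J^{(0)}(D); J^{(n−k+1):}(D̂) = J^{(n+1)}(D); and for each 0 ≤ j ≤ n−k one has [y^{(j)}(D̂)] = [y^{(σ(j))}(D)], [y^{(j+1)}(D̂)] = [y^{(σ(j)+1)}(D)], J^{(j)}(D̂) = J^{(σ(j))}(D), and J^{(j+1)}(D̂) = J^{(σ(j)+1)}(D). -/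

import Mathlib

open scoped Classical Pointwise

noncomputable section

namespace CoxeterCentralizer

/-- The geometric representation space `V`: formal `ℝ`-linear combinations of
the simple roots `α_s`, `s ∈ S`. -/
abbrev GV (S : Type*) := S →₀ ℝ

variable {S W : Type*} [Group W]

/-- The simple root `α_s`. -/
def alpha (s : S) : GV S := Finsupp.single s 1

/-- The value `⟨α_s, α_t⟩ = - cos (π / m(s,t))` of the bilinear form on simple roots
(`m(s,t) = 0` encodes `m(s,t) = ∞`, where the value is `-1`). -/
def cform (M : CoxeterMatrix S) (s t : S) : ℝ :=
  if M s t = 0 then -1 else -Real.cos (Real.pi / (M s t : ℝ))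

/-- The symmetric bilinear form `⟨·,·⟩` on the geometric representation space. -/
def form (M : CoxeterMatrix S) (v w : GV S) : ℝ :=
  v.sum fun s a => w.sum fun t b => a * b * cform M s t

/-- The property that a given action of `W` on `V` is the standard geometric
representation: each simple reflection acts by `s • v = v - 2⟨α_s, v⟩ α_s`. -/
def GeomAction (M : CoxeterMatrix S) (cs : CoxeterSystem M W) [MulAction W (GV S)] : Prop :=
  ∀ (s : S) (v : GV S), cs.simple s • v = v - (2 * form M (alpha s) v) • alpha s

/-- The root system `Φ = W · Π`. -/
def Phi (M : CoxeterMatrix S) (cs : CoxeterSystem M W) [MulAction W (GV S)] : Set (GV S) :=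
  {v | ∃ (w : W) (s : S), v = w • alpha s}

/-- The set of positive roots `Φ⁺ = Φ ∩ ℝ_{≥0} Π`. -/
def PhiPos (M : CoxeterMatrix S) (cs : CoxeterSystem M W) [MulAction W (GV S)] : Set (GV S) :=
  {v ∈ Phi M cs | ∀ s, 0 ≤ v s}

/-- `Φ_J`, the roots supported on `J`. -/
def PhiIn (M : CoxeterMatrix S) (cs : CoxeterSystem M W) [MulAction W (GV S)]
    (J : Set S) : Set (GV S) :=
  {v ∈ Phi M cs | ∀ s, s ∉ J → v s = 0}

/-- `Φ_J^{⊥K}`, the roots supported on `J` orthogonal to all `α_s`, `s ∈ K`. -/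
def PhiPerp (M : CoxeterMatrix S) (cs : CoxeterSystem M W) [MulAction W (GV S)]
    (J K : Set S) : Set (GV S) :=
  {v ∈ PhiIn M cs J | ∀ s ∈ K, form M v (alpha s) = 0}

/-- The reflection `s_γ = w s w⁻¹` along a root `γ = w • α_s`. -/
def sref (M : CoxeterMatrix S) (cs : CoxeterSystem M W) [MulAction W (GV S)]
    (γ : GV S) : W :=
  if h : ∃ (w : W) (s : S), γ = w • alpha s then
    h.choose * cs.simple h.choose_spec.choose * h.choose⁻¹
  else 1

/-- The (standard) parabolic subgroup `W_I`. -/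
def WP (M : CoxeterMatrix S) (cs : CoxeterSystem M W) (I : Set S) : Subgroup W :=
  Subgroup.closure (cs.simple '' I)

/-- `I ⊆ S` is of finite type if `W_I` is finite. -/
def FiniteType (M : CoxeterMatrix S) (cs : CoxeterSystem M W) (I : Set S) : Prop :=
  (WP M cs I : Set W).Finite

/-- Adjacency in the Coxeter graph: `s` and `t` are joined by an edge iff `m(s,t) ≥ 3`
(including `m(s,t) = ∞`, encoded as `0`). -/
def Adj (M : CoxeterMatrix S) (s t : S) : Prop := 3 ≤ M s t ∨ M s t = 0

/-- `J` is adjacent to `K` if some element of `J` is joined by an edge to some element of `K`. -/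
def AdjSets (M : CoxeterMatrix S) (J K : Set S) : Prop := ∃ s ∈ J, ∃ t ∈ K, Adj M s t

/-- `J` is apart from `K` if they are disjoint and not adjacent. -/
def Apart (M : CoxeterMatrix S) (J K : Set S) : Prop := J ∩ K = ∅ ∧ ¬ AdjSets M J K

/-- Connectivity within `C ⊆ S` in the Coxeter graph. -/
def ConnIn (M : CoxeterMatrix S) (C : Set S) (s t : S) : Prop :=
  Relation.ReflTransGen (fun a b => b ∈ C ∧ Adj M a b) s t

/-- `C ⊆ S` is irreducible: nonempty and its induced Coxeter graph is connected. -/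
def IsIrreducible (M : CoxeterMatrix S) (C : Set S) : Prop :=
  C.Nonempty ∧ ∀ s ∈ C, ∀ t ∈ C, ConnIn M C s t

/-- `D` is an irreducible component of `C`: a connected component of the Coxeter
graph induced on `C`. -/
def IsComponent (M : CoxeterMatrix S) (C D : Set S) : Prop :=
  ∃ s ∈ C, D = {t ∈ C | ConnIn M C s t}

/-- The Coxeter matrix of type `A_n` (standard labelling, `0`-indexed). -/
def AMat (n : ℕ) : Fin n → Fin n → ℕ := fun i j =>
  if i = j then 1 else if i.1 + 1 = j.1 ∨ j.1 + 1 = i.1 then 3 else 2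

/-- `C ⊆ S` is of the type given by the labelled Coxeter matrix `A` on `Fin n`. -/
def IsGraphType (M : CoxeterMatrix S) {n : ℕ} (A : Fin n → Fin n → ℕ) (C : Set S) : Prop :=
  ∃ r : Fin n → S, Function.Injective r ∧ C = Set.range r ∧ ∀ i j, M (r i) (r j) = A i j

/-- `I` is `A_{>1}`-free: it has no irreducible component of type `A_n`, `2 ≤ n < ∞`. -/
def AFree (M : CoxeterMatrix S) (I : Set S) : Prop :=
  ∀ C, IsComponent M I C → ∀ n, 2 ≤ n → ¬ IsGraphType M (AMat n) C

/-- The reflection subgroup `W(Ψ)` generated by the reflections along the roots in `Ψ`. -/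
def WRefl (M : CoxeterMatrix S) (cs : CoxeterSystem M W) [MulAction W (GV S)]
    (Ψ : Set (GV S)) : Subgroup W :=
  Subgroup.closure (sref M cs '' Ψ)

/-- The "root system" `W(Ψ) · Ψ` of the reflection subgroup `W(Ψ)`. -/
def orb (M : CoxeterMatrix S) (cs : CoxeterSystem M W) [MulAction W (GV S)]
    (Ψ : Set (GV S)) : Set (GV S) :=
  {v | ∃ w ∈ WRefl M cs Ψ, ∃ γ ∈ Ψ, v = w • γ}

/-- The positive part `(W(Ψ) · Ψ)⁺` of the root system of `W(Ψ)`. -/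
def orbPos (M : CoxeterMatrix S) (cs : CoxeterSystem M W) [MulAction W (GV S)]
    (Ψ : Set (GV S)) : Set (GV S) :=
  {v ∈ orb M cs Ψ | ∀ s, 0 ≤ v s}

/-- The simple system `Π(Ψ)` of the reflection subgroup `W(Ψ)`: those
`γ ∈ (W(Ψ)·Ψ)⁺` such that any expression `γ = Σ c_i • β_i` with `c_i > 0` and
`β_i ∈ (W(Ψ)·Ψ)⁺` forces `β_i = γ` for all `i`. -/
def simpleSys (M : CoxeterMatrix S) (cs : CoxeterSystem M W) [MulAction W (GV S)]
    (Ψ : Set (GV S)) : Set (GV S) :=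
  {γ ∈ orbPos M cs Ψ |
    ∀ (n : ℕ) (c : Fin n → ℝ) (β : Fin n → GV S),
      (∀ i, 0 < c i) → (∀ i, β i ∈ orbPos M cs Ψ) → γ = ∑ i, c i • β i →
      ∀ i, β i = γ}

/-- The simple system `Π^{J,K} = Π(Φ_J^{⊥K})`. -/
def PiPerp (M : CoxeterMatrix S) (cs : CoxeterSystem M W) [MulAction W (GV S)]
    (J K : Set S) : Set (GV S) :=
  simpleSys M cs (PhiPerp M cs J K)

/-- The simple system `Π^I = Π(Φ^{⊥I})` of `W^{⊥I}`. -/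
def PiI (M : CoxeterMatrix S) (cs : CoxeterSystem M W) [MulAction W (GV S)]
    (I : Set S) : Set (GV S) :=
  PiPerp M cs Set.univ I

/-- The subgroup `C_I = {w ∈ W : w • α_s = α_s for all s ∈ I}` (as a set). -/
def CIset (M : CoxeterMatrix S) (cs : CoxeterSystem M W) [MulAction W (GV S)]
    (I : Set S) : Set W :=
  {w : W | ∀ s ∈ I, w • alpha s = alpha s}

/-- The subgroup `Y_I = {w ∈ C_I : w • (Φ^{⊥I})⁺ ⊆ Φ⁺}` (as a set). -/
def YIset (M : CoxeterMatrix S) (cs : CoxeterSystem M W) [MulAction W (GV S)]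
    (I : Set S) : Set W :=
  {w ∈ CIset M cs I |
    ∀ γ ∈ PhiPerp M cs Set.univ I ∩ PhiPos M cs, w • γ ∈ PhiPos M cs}

/-- Adjacency of two simple roots of a reflection subgroup, in the Coxeter graph of the
reflection subgroup: the corresponding reflections do not commute. -/
def RootAdj (M : CoxeterMatrix S) (cs : CoxeterSystem M W) [MulAction W (GV S)]
    (β β' : GV S) : Prop :=
  β ≠ β' ∧ sref M cs β * sref M cs β' ≠ sref M cs β' * sref M cs β

/-- Connectivity within a set `P` of roots in the Coxeter graph of the reflection
subgroup generated by the reflections along roots in `P`. -/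
def RootConnIn (M : CoxeterMatrix S) (cs : CoxeterSystem M W) [MulAction W (GV S)]
    (P : Set (GV S)) (β β' : GV S) : Prop :=
  Relation.ReflTransGen (fun a b => b ∈ P ∧ RootAdj M cs a b) β β'

/-- The irreducible component of the simple system `P` containing the root `β`. -/
def RootComp (M : CoxeterMatrix S) (cs : CoxeterSystem M W) [MulAction W (GV S)]
    (P : Set (GV S)) (β : GV S) : Set (GV S) :=
  {β' ∈ P | RootConnIn M cs P β β'}

/-- `C` is an irreducible component of the simple system `P`. -/
def IsRootComponent (M : CoxeterMatrix S) (cs : CoxeterSystem M W) [MulAction W (GV S)]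
    (P C : Set (GV S)) : Prop :=
  ∃ β ∈ P, C = RootComp M cs P β

/-- The finite part `W^{⊥I}_fin` of the Coxeter system `(W^{⊥I}, R^I)`:
the subgroup generated by the finite irreducible components of `W^{⊥I}`. -/
def PerpFin (M : CoxeterMatrix S) (cs : CoxeterSystem M W) [MulAction W (GV S)]
    (I : Set S) : Subgroup W :=
  Subgroup.closure (sref M cs ''
    {β ∈ PiI M cs I | ((WRefl M cs (RootComp M cs (PiI M cs I) β) : Set W)).Finite})

/-- The infinite part `W^{⊥I}_inf` of the Coxeter system `(W^{⊥I}, R^I)`: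
the subgroup generated by the infinite irreducible components of `W^{⊥I}`. -/
def PerpInf (M : CoxeterMatrix S) (cs : CoxeterSystem M W) [MulAction W (GV S)]
    (I : Set S) : Subgroup W :=
  Subgroup.closure (sref M cs ''
    {β ∈ PiI M cs I | ¬ ((WRefl M cs (RootComp M cs (PiI M cs I) β) : Set W)).Finite})

/-- `Π_J`, the set of simple roots with index in `J`. -/
def alphaSet (J : Set S) : Set (GV S) := alpha '' J

/-- `P` is a basis of the span of `T`. -/
def IsBasisOfSpan (P T : Set (GV S)) : Prop :=
  LinearIndependent ℝ (fun v : ↥P => (v : GV S)) ∧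
    Submodule.span ℝ P = Submodule.span ℝ T

/-- The longest element `w_0(L)` of a finite parabolic subgroup `W_L`. -/
def w0 (M : CoxeterMatrix S) (cs : CoxeterSystem M W) (L : Set S) : W :=
  if h : ∃ w ∈ WP M cs L, ∀ u ∈ WP M cs L, cs.length u ≤ cs.length w then h.choose else 1

/-- `J_{∼K}`: the set of elements of `J ∪ K` lying in the same connected component of the
Coxeter graph induced on `J ∪ K` as some element of `K`. -/
def sTilde (M : CoxeterMatrix S) (J K : Set S) : Set S :=
  {s ∈ J ∪ K | ∃ t ∈ K, ConnIn M (J ∪ K) t s}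

/-- `S^{(Λ)}`: the set of injective maps (duplicate-free `Λ`-tuples) `Λ → S`. -/
def SInj (S Λ : Type*) := {x : Λ → S // Function.Injective x}

/-- `[x]`: the image of the tuple `x ∈ S^{(Λ)}`. -/
def rng {S Λ : Type*} (x : SInj S Λ) : Set S := Set.range x.1

/-- `C_{x,y} = {w ∈ W : α_{x_λ} = w • α_{y_λ} for all λ}`. -/
def Cpair (M : CoxeterMatrix S) (cs : CoxeterSystem M W) [MulAction W (GV S)]
    {Λ : Type*} (x y : SInj S Λ) : Set W :=
  {w : W | ∀ l : Λ, w • alpha (y.1 l) = alpha (x.1 l)}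

/-- `Y_{x,y} = {w ∈ C_{x,y} : w • (Φ^{⊥[y]})⁺ ⊆ Φ⁺}`. -/
def Ypair (M : CoxeterMatrix S) (cs : CoxeterSystem M W) [MulAction W (GV S)]
    {Λ : Type*} (x y : SInj S Λ) : Set W :=
  {w ∈ Cpair M cs x y |
    ∀ γ ∈ PhiPerp M cs Set.univ (rng y) ∩ PhiPos M cs, w • γ ∈ PhiPos M cs}

/-- A semi-standard decomposition `u = ω_{n-1} ⋯ ω_1 ω_0` of an element `u ∈ Y_{z,y}`
with respect to `J ⊆ S`, with data `y^{(i)}`, `t^{(i)}`, `J^{(i)}`, supports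
`K^{(i)} = ([y^{(i)}] ∪ J^{(i)})_{∼ t^{(i)}}` and
`ω_i = w_0(K^{(i)}) w_0(K^{(i)} ∖ {t^{(i)}})`. -/
structure SemiStd {S W : Type*} [Group W] (M : CoxeterMatrix S) (cs : CoxeterSystem M W)
    [MulAction W (GV S)] (Λ : Type*) (u : W) (y z : SInj S Λ) (J : Set S) where
  n : ℕ
  ys : Fin (n + 1) → SInj S Λ
  ts : Fin n → S
  Js : Fin (n + 1) → Set S
  Ks : Fin n → Set S
  om : Fin n → W
  h_y0 : ys 0 = y
  h_yn : ys (Fin.last n) = z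
  h_J0 : Js 0 = J
  h_K : ∀ i, Ks i = sTilde M (rng (ys i.castSucc) ∪ Js i.castSucc) {ts i}
  h_om : ∀ i, om i = w0 M cs (Ks i) * w0 M cs (Ks i \ {ts i})
  h_t_notin : ∀ i, ts i ∉ rng (ys i.castSucc) ∪ Js i.castSucc
  h_t_adj : ∀ i, AdjSets M {ts i} (rng (ys i.castSucc))
  h_K_fin : ∀ i, FiniteType M cs (Ks i)
  h_Y : ∀ i, om i ∈ Ypair M cs (ys i.succ) (ys i.castSucc)
  h_J_map : ∀ i, (fun v => om i • v) '' alphaSet (Js i.castSucc) = alphaSet (Js i.succ)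
  h_prod : u = (List.ofFn om).reverse.prod

variable {Λ : Type*} {M : CoxeterMatrix S} {cs : CoxeterSystem M W} [MulAction W (GV S)]

/-- `ω_i` is a wide transformation: its support intersects `J^{(i)} ∖ [y^{(i)}]`. -/
def SemiStd.Wide {u : W} {y z : SInj S Λ} {J : Set S} (D : SemiStd M cs Λ u y z J)
    (i : Fin D.n) : Prop :=
  (D.Ks i ∩ (D.Js i.castSucc \ rng (D.ys i.castSucc))).Nonempty

/-- A semi-standard decomposition is standard if the lengths add up:
`ℓ(u) = Σ_j ℓ(ω_j)`. -/
def SemiStd.IsStd {u : W} {y z : SInj S Λ} {J : Set S} (D : SemiStd M cs Λ u y z J) : Prop :=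
  cs.length u = ∑ i : Fin D.n, cs.length (D.om i)


/-! ### Auxiliary lemmas for the simplification theorem -/

section SimplAux

set_option linter.unusedVariables false
set_option linter.unusedSectionVars false

lemma alpha_injective : Function.Injective (alpha : S → GV S) :=
  Finsupp.single_left_injective one_ne_zero

lemma cform_symm (s t : S) : cform M s t = cform M t s := by
  rw [cform, cform, M.symmetric]

lemma form_symm (v w : GV S) : form M v w = form M w v := by
  rw [form, form, Finsupp.sum_comm]
  congr 1; funext s a; congr 1; funext t b
  rw [cform_symm]; ring

lemma form_alpha_left (s : S) (w : GV S) :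
    form M (alpha s) w = w.sum fun t b => b * cform M s t := by
  rw [form, alpha, Finsupp.sum_single_index (by simp)]
  congr 1; funext t b; ring

lemma form_add_left (v1 v2 w : GV S) :
    form M (v1 + v2) w = form M v1 w + form M v2 w := by
  rw [form, form, form, Finsupp.sum_add_index' (by simp)]
  intro s a1 a2
  rw [← Finsupp.sum_add]
  congr 1; funext t b; ring

lemma form_smul_left (c : ℝ) (v w : GV S) :
    form M (c • v) w = c * form M v w := by
  rw [form, form, Finsupp.sum_smul_index (by simp), Finsupp.mul_sum]
  congr 1; funext s a
  rw [Finsupp.mul_sum]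
  congr 1; funext t b; ring

lemma form_sub_left (c : ℝ) (u v w : GV S) :
    form M (v - c • u) w = form M v w - c * form M u w := by
  have h : v - c • u = v + (-c) • u := by rw [neg_smul, ← sub_eq_add_neg]
  rw [h, form_add_left, form_smul_left]; ring

lemma form_sub_right (c : ℝ) (u v w : GV S) :
    form M w (v - c • u) = form M w v - c * form M w u := by
  rw [form_symm, form_sub_left, form_symm v w, form_symm u w]

lemma form_alpha_alpha (s : S) : form M (alpha s) (alpha s) = 1 := by
  rw [form_alpha_left, alpha, Finsupp.sum_single_index (by simp), one_mul, cform,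
    M.diagonal]
  norm_num

lemma form_simple_inv (hact : GeomAction M cs) (s : S) (v w : GV S) :
    form M (cs.simple s • v) (cs.simple s • w) = form M v w := by
  rw [hact, hact, form_sub_left, form_sub_right, form_sub_right, form_alpha_alpha,
    form_symm v (alpha s)]
  ring

lemma form_inv (hact : GeomAction M cs) (w : W) (v v' : GV S) :
    form M (w • v) (w • v') = form M v v' := by
  obtain ⟨ω, rfl⟩ := cs.wordProd_surjective w
  induction ω generalizing v v' with
  | nil => rw [CoxeterSystem.wordProd_nil, one_smul, one_smul]
  | cons i l ih =>
    rw [cs.wordProd_cons, mul_smul, mul_smul, form_simple_inv hact, ih]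

lemma smul_mem_phi {γ : GV S} (w : W) (h : γ ∈ Phi M cs) : w • γ ∈ Phi M cs := by
  obtain ⟨w', s, rfl⟩ := h
  exact ⟨w * w', s, (mul_smul w w' _).symm⟩

lemma ypair_one (a : SInj S Λ) : (1 : W) ∈ Ypair M cs a a :=
  ⟨fun l => one_smul _ _, fun γ hγ => by rw [one_smul]; exact hγ.2⟩

lemma ypair_mul (hact : GeomAction M cs) {a b c : SInj S Λ} {w1 w2 : W}
    (h1 : w1 ∈ Ypair M cs b a) (h2 : w2 ∈ Ypair M cs c b) :
    w2 * w1 ∈ Ypair M cs c a := by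
  obtain ⟨h1c, h1p⟩ := h1
  obtain ⟨h2c, h2p⟩ := h2
  refine ⟨fun l => by rw [mul_smul, h1c l]; exact h2c l, ?_⟩
  intro γ hγ
  obtain ⟨⟨⟨hphi, -⟩, horth⟩, hpos⟩ := hγ
  rw [mul_smul]
  apply h2p
  refine ⟨⟨⟨smul_mem_phi w1 hphi, fun s hs => absurd (Set.mem_univ s) hs⟩, ?_⟩,
    h1p γ ⟨⟨⟨hphi, fun s hs => absurd (Set.mem_univ s) hs⟩, horth⟩, hpos⟩⟩
  rintro s ⟨l, rfl⟩
  rw [← h1c l, form_inv hact]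
  exact horth _ ⟨l, rfl⟩

lemma ypair_chain (hact : GeomAction M cs) :
    ∀ (mm : ℕ) (bs : Fin (mm + 1) → SInj S Λ) (g : Fin mm → W),
      (∀ i, g i ∈ Ypair M cs (bs i.succ) (bs i.castSucc)) →
      (List.ofFn g).reverse.prod ∈ Ypair M cs (bs (Fin.last mm)) (bs 0) := by
  intro mm
  induction mm with
  | zero =>
    intro bs g _
    simpa using ypair_one (bs 0)
  | succ mm ih =>
    intro bs g hg
    rw [List.ofFn_succ, List.reverse_cons, List.prod_append, List.prod_singleton]
    have htail := ih (fun j => bs j.succ) (fun j => g j.succ) (fun i => by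
      show g i.succ ∈ Ypair M cs (bs i.succ.succ) (bs i.castSucc.succ)
      rw [Fin.succ_castSucc]
      exact hg i.succ)
    have h0 := hg 0
    rw [Fin.castSucc_zero] at h0
    simpa using ypair_mul hact h0 htail

/-- Push a duplicate-free tuple forward along the action of `w`, when `w` maps
the corresponding simple roots to simple roots. -/
def pushTuple (w : W) (a : SInj S Λ) : SInj S Λ :=
  if h : ∀ l, ∃ s, w • alpha (a.1 l) = alpha s then
    ⟨fun l => (h l).choose, fun l1 l2 he => by
      apply a.2
      apply alpha_injective
      apply MulAction.injective w
      show w • alpha (a.1 l1) = w • alpha (a.1 l2)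
      rw [(h l1).choose_spec, (h l2).choose_spec]
      exact congrArg _ he⟩
  else a

lemma pushTuple_spec (w : W) (a : SInj S Λ)
    (h : ∀ l, ∃ s, w • alpha (a.1 l) = alpha s) (l : Λ) :
    w • alpha (a.1 l) = alpha (((pushTuple (S := S) (W := W) w a)).1 l) := by
  have he : pushTuple (S := S) (W := W) w a = ⟨fun l => (h l).choose, (pushTuple._proof_1 w a h)⟩ := dif_pos h
  rw [he]
  exact (h l).choose_spec

/-- Iterate `pushTuple` along a sequence of group elements. -/
def seqTuple (om' : ℕ → W) (a : SInj S Λ) : ℕ → SInj S Λ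
  | 0 => a
  | j + 1 => pushTuple (om' j) (seqTuple om' a j)

/-- Extension of a deleted-factor sequence by the identity. -/
def omExt {W : Type*} [Group W] {n k' : ℕ} (σ : Fin k' → Fin n) (om : Fin n → W) (j : ℕ) : W :=
  if h : j < k' then om (σ ⟨j, h⟩) else 1

/-- The index in the original decomposition corresponding to position `j`. -/
def tauIdx {n k' : ℕ} (σ : Fin k' → Fin n) (j : ℕ) : Fin (n + 1) :=
  if h : j < k' then (σ ⟨j, h⟩).castSucc else Fin.last n

end SimplAux

/-- **Simplification of a semi-standard decomposition.** Deleting from a semi-standard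
decomposition `D = ω_n ⋯ ω_1 ω_0` of `u ∈ Y_{z,y}` exactly those factors `ω_i` with
`[y^{(i+1)}] = [y^{(i)}]` and `J^{(i+1)} = J^{(i)}` yields (via the order-preserving
index map `σ`) an element `û ∈ Y_{ẑ,y}` with `[ẑ] = [z]`, and the resulting expression
is a semi-standard decomposition of `û` with respect to `J` whose data matches that of
`D` along `σ` as stated. -/
theorem simplification_semistandard {S W : Type*} [Group W] (M : CoxeterMatrix S)
    (cs : CoxeterSystem M W) [MulAction W (GV S)] (hact : GeomAction M cs) {Λ : Type*}
    {u : W} {y z : SInj S Λ} {J : Set S} (D : SemiStd M cs Λ u y z J)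
    (del : Fin D.n → Prop)
    (hdel : ∀ i, del i ↔
      (rng (D.ys i.succ) = rng (D.ys i.castSucc) ∧ D.Js i.succ = D.Js i.castSucc))
    (k : ℕ) (hk : k = (Finset.univ.filter fun i => del i).card)
    (σ : Fin (D.n - k) → Fin D.n) (hσmono : StrictMono σ)
    (hσrange : Set.range σ = {i | ¬ del i})
    (uhat : W) (huhat : uhat = (List.ofFn fun j => D.om (σ j)).reverse.prod) :
    ∃ zhat : SInj S Λ, rng zhat = rng z ∧ uhat ∈ Ypair M cs zhat y ∧
    ∃ E : SemiStd M cs Λ uhat y zhat J, ∃ hEn : E.n = D.n - k,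
      (∀ j : Fin (D.n - k),
        E.om (Fin.cast hEn.symm j) = D.om (σ j) ∧
        rng (E.ys (Fin.cast (by omega) j.castSucc)) = rng (D.ys (σ j).castSucc) ∧
        rng (E.ys (Fin.cast (by omega) j.succ)) = rng (D.ys (σ j).succ) ∧
        E.Js (Fin.cast (by omega) j.castSucc) = D.Js (σ j).castSucc ∧
        E.Js (Fin.cast (by omega) j.succ) = D.Js (σ j).succ) ∧
      E.Js (Fin.last E.n) = D.Js (Fin.last D.n) := by

  classical
  -- Basic consequences of `hσrange`.
  have hdel' : ∀ i : Fin D.n, i ∉ Set.range σ → del i := by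
    intro i hi
    by_contra h
    exact hi (by rw [hσrange]; exact h)
  -- Transfer of `rng ∘ D.ys` and `D.Js` across intervals of deleted indices.
  have hIvKey : ∀ nn : ℕ, ∀ a b : Fin (D.n + 1), a.1 ≤ b.1 → b.1 - a.1 = nn →
      (∀ i : Fin D.n, a.1 ≤ i.1 → i.1 < b.1 → del i) →
      rng (D.ys a) = rng (D.ys b) ∧ D.Js a = D.Js b := by
    intro nn
    induction nn with
    | zero =>
      intro a b hab hsub _
      have hb : a = b := Fin.ext (by omega)
      rw [hb]
      exact ⟨rfl, rfl⟩
    | succ nn ih =>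
      intro a b hab hsub hdl
      have hb2 := b.2
      obtain ⟨bv, hbv⟩ : ∃ bv, b.1 = bv + 1 := ⟨b.1 - 1, by omega⟩
      set i : Fin D.n := ⟨bv, by omega⟩ with hidef
      have hcv : (i.castSucc).1 = bv := rfl
      have hsv : (i.succ).1 = bv + 1 := rfl
      have hiv : i.1 = bv := rfl
      have hib : i.succ = b := Fin.ext (by rw [hsv]; omega)
      have hprev := ih a i.castSucc (by omega) (by omega)
        (fun i' h1 h2 => hdl i' h1 (by omega))
      have hstep := (hdel i).1 (hdl i (by omega) (by omega))
      rw [← hib]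
      exact ⟨hprev.1.trans hstep.1.symm, hprev.2.trans hstep.2.symm⟩
  have hIv : ∀ a b : Fin (D.n + 1), a.1 ≤ b.1 →
      (∀ i : Fin D.n, a.1 ≤ i.1 → i.1 < b.1 → del i) →
      rng (D.ys a) = rng (D.ys b) ∧ D.Js a = D.Js b :=
    fun a b hab hdl => hIvKey (b.1 - a.1) a b hab rfl hdl
  -- Indices lying in the "gaps" of `σ` are deleted.
  have hgap0 : ∀ (h0 : 0 < D.n - k) (i : Fin D.n), i.1 < (σ ⟨0, h0⟩).1 → del i := by
    intro h0 i hi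
    apply hdel'
    rintro ⟨j, rfl⟩
    have hle : σ ⟨0, h0⟩ ≤ σ j :=
      hσmono.monotone (by rw [Fin.le_def]; exact Nat.zero_le _)
    have hle' := Fin.le_def.mp hle
    omega
  have hgapS : ∀ (j : ℕ) (hj : j < D.n - k) (i : Fin D.n), (σ ⟨j, hj⟩).1 < i.1 →
      (∀ hj1 : j + 1 < D.n - k, i.1 < (σ ⟨j + 1, hj1⟩).1) → del i := by
    intro j hj i h1 h2
    apply hdel'
    rintro ⟨j', rfl⟩
    have hgt : j < j'.1 := Fin.lt_def.mp ((hσmono.lt_iff_lt).mp (Fin.lt_def.mpr h1))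
    by_cases hc : j + 1 < D.n - k
    · have h3 := h2 hc
      have h4 : j'.1 < j + 1 :=
        Fin.lt_def.mp ((hσmono.lt_iff_lt).mp (Fin.lt_def.mpr h3))
      omega
    · have h5 := j'.2
      omega
  have hgapAll : D.n - k = 0 → ∀ i : Fin D.n, del i := by
    intro h0 i
    apply hdel'
    rintro ⟨j, -⟩
    exact absurd j.2 (by omega)
  -- `tauIdx` facts.
  have hτpos : ∀ (j : ℕ) (hj : j < D.n - k), tauIdx σ j = (σ ⟨j, hj⟩).castSucc :=
    fun j hj => dif_pos hj
  have hτneg : ∀ j : ℕ, ¬ j < D.n - k → tauIdx σ j = Fin.last D.n :=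
    fun j hj => dif_neg hj
  have Q0 : rng (D.ys 0) = rng (D.ys (tauIdx σ 0)) ∧ D.Js 0 = D.Js (tauIdx σ 0) := by
    have h00 : (0 : Fin (D.n + 1)).1 = 0 := rfl
    by_cases h0 : 0 < D.n - k
    · have hcv0 : ((σ ⟨0, h0⟩).castSucc).1 = (σ ⟨0, h0⟩).1 := rfl
      rw [hτpos 0 h0]
      apply hIv
      · omega
      · intro i h1 h2
        exact hgap0 h0 i (by omega)
    · have hlv : (Fin.last D.n).1 = D.n := rfl
      rw [hτneg 0 h0]
      apply hIv
      · omega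
      · intro i _ _
        exact hgapAll (by omega) i
  have Qstep : ∀ (j : ℕ) (hj : j < D.n - k),
      rng (D.ys (σ ⟨j, hj⟩).succ) = rng (D.ys (tauIdx σ (j + 1))) ∧
      D.Js (σ ⟨j, hj⟩).succ = D.Js (tauIdx σ (j + 1)) := by
    intro j hj
    have hsv : ((σ ⟨j, hj⟩).succ).1 = (σ ⟨j, hj⟩).1 + 1 := rfl
    by_cases hc : j + 1 < D.n - k
    · have hlt : (σ ⟨j, hj⟩).1 < (σ ⟨j + 1, hc⟩).1 :=
        Fin.lt_def.mp (hσmono (Fin.lt_def.mpr (Nat.lt_succ_self j)))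
      have hcv : ((σ ⟨j + 1, hc⟩).castSucc).1 = (σ ⟨j + 1, hc⟩).1 := rfl
      rw [hτpos (j + 1) hc]
      apply hIv
      · omega
      · intro i h1 h2
        refine hgapS j hj i (by omega) (fun hj1 => ?_)
        have he : σ ⟨j + 1, hc⟩ = σ ⟨j + 1, hj1⟩ := rfl
        rw [← he]
        omega
    · have hσ2 := (σ ⟨j, hj⟩).2
      have hlv : (Fin.last D.n).1 = D.n := rfl
      rw [hτneg (j + 1) hc]
      apply hIv
      · omega
      · intro i h1 h2
        exact hgapS j hj i (by omega) (fun hj1 => absurd hj1 hc)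
  -- The sequence of tuples obtained by pushing `y` along the surviving factors.
  set F : ℕ → SInj S Λ := seqTuple (omExt σ D.om) y with hFdef
  have hF0 : F 0 = y := rfl
  have hFs : ∀ (j : ℕ) (hj : j < D.n - k),
      F (j + 1) = pushTuple (D.om (σ ⟨j, hj⟩)) (F j) := by
    intro j hj
    have homj : omExt σ D.om j = D.om (σ ⟨j, hj⟩) := dif_pos hj
    rw [hFdef]
    show pushTuple (omExt σ D.om j) (seqTuple (omExt σ D.om) y j) = _
    rw [homj]
  have main : ∀ j, j ≤ D.n - k → rng (F j) = rng (D.ys (tauIdx σ j)) := by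
    intro j
    induction j with
    | zero =>
      intro _
      have h := Q0.1
      rw [D.h_y0] at h
      rw [hF0]
      exact h
    | succ j ih =>
      intro hj1
      have hj : j < D.n - k := by omega
      have hij := ih (by omega)
      rw [hτpos j hj] at hij
      have hcp : ∀ l, D.om (σ ⟨j, hj⟩) • alpha ((D.ys (σ ⟨j, hj⟩).castSucc).1 l)
          = alpha ((D.ys (σ ⟨j, hj⟩).succ).1 l) := (D.h_Y (σ ⟨j, hj⟩)).1
      have hex : ∀ l, ∃ s, D.om (σ ⟨j, hj⟩) • alpha ((F j).1 l) = alpha s := by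
        intro l
        have hmem : (F j).1 l ∈ rng (D.ys (σ ⟨j, hj⟩).castSucc) := by
          rw [← hij]; exact ⟨l, rfl⟩
        obtain ⟨l', hl'⟩ := hmem
        exact ⟨(D.ys (σ ⟨j, hj⟩).succ).1 l', by rw [← hl']; exact hcp l'⟩
      have hspec : ∀ l, D.om (σ ⟨j, hj⟩) • alpha ((F j).1 l)
          = alpha ((F (j + 1)).1 l) := by
        intro l
        rw [hFs j hj]
        exact pushTuple_spec _ _ hex l
      have hr : rng (F (j + 1)) = rng (D.ys (σ ⟨j, hj⟩).succ) := by
        ext s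
        simp only [rng, Set.mem_range]
        constructor
        · rintro ⟨l, rfl⟩
          have hmem : (F j).1 l ∈ rng (D.ys (σ ⟨j, hj⟩).castSucc) := by
            rw [← hij]; exact ⟨l, rfl⟩
          obtain ⟨l', hl'⟩ := hmem
          have h1 := hcp l'
          rw [hl'] at h1
          exact ⟨l', alpha_injective (h1.symm.trans (hspec l))⟩
        · rintro ⟨l', rfl⟩
          have hmem : (D.ys (σ ⟨j, hj⟩).castSucc).1 l' ∈ rng (F j) := by
            rw [hij]; exact ⟨l', rfl⟩
          obtain ⟨l, hl⟩ := hmem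
          refine ⟨l, alpha_injective ?_⟩
          rw [← hspec l, hl]
          exact hcp l'
      rw [hr]
      exact (Qstep j hj).1
  -- The Cpair property of the surviving factors with respect to `F`.
  have hcpF : ∀ (i : Fin (D.n - k)) (l : Λ),
      D.om (σ i) • alpha ((F i.1).1 l) = alpha ((F (i.1 + 1)).1 l) := by
    intro i l
    have hj : i.1 < D.n - k := i.2
    have hij := main i.1 (by omega)
    rw [hτpos i.1 hj] at hij
    have hcp : ∀ l, D.om (σ ⟨i.1, hj⟩) • alpha ((D.ys (σ ⟨i.1, hj⟩).castSucc).1 l)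
        = alpha ((D.ys (σ ⟨i.1, hj⟩).succ).1 l) := (D.h_Y (σ ⟨i.1, hj⟩)).1
    have hex : ∀ l, ∃ s, D.om (σ ⟨i.1, hj⟩) • alpha ((F i.1).1 l) = alpha s := by
      intro l'
      have hmem : (F i.1).1 l' ∈ rng (D.ys (σ ⟨i.1, hj⟩).castSucc) := by
        rw [← hij]; exact ⟨l', rfl⟩
      obtain ⟨l'', hl''⟩ := hmem
      exact ⟨(D.ys (σ ⟨i.1, hj⟩).succ).1 l'', by rw [← hl'']; exact hcp l''⟩
    have heta : (⟨i.1, hj⟩ : Fin (D.n - k)) = i := Fin.ext rfl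
    rw [← heta, hFs i.1 hj]
    exact pushTuple_spec _ _ hex l
  -- Transfer facts along `σ`.
  have hys_c : ∀ i : Fin (D.n - k), rng (F i.1) = rng (D.ys (σ i).castSucc) := by
    intro i
    have h := main i.1 (le_of_lt i.2)
    rw [hτpos i.1 i.2] at h
    rwa [show (⟨i.1, i.2⟩ : Fin (D.n - k)) = i from Fin.ext rfl] at h
  have hys_s : ∀ i : Fin (D.n - k), rng (F (i.1 + 1)) = rng (D.ys (σ i).succ) := by
    intro i
    have h := main (i.1 + 1) i.2
    have h2 := (Qstep i.1 i.2).1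
    rw [show (⟨i.1, i.2⟩ : Fin (D.n - k)) = i from Fin.ext rfl] at h2
    exact h.trans h2.symm
  have hJs_c : ∀ i : Fin (D.n - k), D.Js (tauIdx σ i.1) = D.Js (σ i).castSucc := by
    intro i
    rw [hτpos i.1 i.2, show (⟨i.1, i.2⟩ : Fin (D.n - k)) = i from Fin.ext rfl]
  have hJs_s : ∀ i : Fin (D.n - k), D.Js (tauIdx σ (i.1 + 1)) = D.Js (σ i).succ := by
    intro i
    have h2 := (Qstep i.1 i.2).2
    rw [show (⟨i.1, i.2⟩ : Fin (D.n - k)) = i from Fin.ext rfl] at h2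
    exact h2.symm
  have hK_tr : ∀ i : Fin (D.n - k),
      sTilde M (rng (F i.1) ∪ D.Js (tauIdx σ i.1)) {D.ts (σ i)} = D.Ks (σ i) := by
    intro i
    rw [hys_c i, hJs_c i]
    exact (D.h_K (σ i)).symm
  have hYall : ∀ i : Fin (D.n - k),
      D.om (σ i) ∈ Ypair M cs (F (i.1 + 1)) (F i.1) := by
    intro i
    refine ⟨fun l => hcpF i l, ?_⟩
    intro γ hγ
    rw [hys_c i] at hγ
    exact (D.h_Y (σ i)).2 γ hγ
  -- The two main conclusions about `uhat`.
  have hrngz : rng (F (D.n - k)) = rng z := by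
    have h := main (D.n - k) le_rfl
    rw [hτneg (D.n - k) (lt_irrefl _)] at h
    rw [h, D.h_yn]
  have hmemY : uhat ∈ Ypair M cs (F (D.n - k)) y := by
    have hchain := ypair_chain hact (D.n - k) (fun j : Fin (D.n - k + 1) => F j.1)
      (fun i => D.om (σ i)) (fun i => by
        show D.om (σ i) ∈ Ypair M cs (F (i.succ).1) (F (i.castSucc).1)
        rw [Fin.val_succ, Fin.coe_castSucc]
        exact hYall i)
    simp only [Fin.val_last, Fin.val_zero] at hchain
    rw [hF0] at hchain
    rw [huhat]
    exact hchain
  -- Assemble the simplified decomposition.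
  refine ⟨F (D.n - k), hrngz, hmemY,
    { n := D.n - k
      ys := fun j => F j.1
      ts := fun i => D.ts (σ i)
      Js := fun j => D.Js (tauIdx σ j.1)
      Ks := fun i => sTilde M (rng (F i.1) ∪ D.Js (tauIdx σ i.1)) {D.ts (σ i)}
      om := fun i => D.om (σ i)
      h_y0 := by simp only [Fin.val_zero]; exact hF0
      h_yn := by simp only [Fin.val_last]
      h_J0 := by simp only [Fin.val_zero]; rw [← Q0.2]; exact D.h_J0
      h_K := fun i => by simp only [Fin.coe_castSucc]
      h_om := fun i => by simp only [hK_tr i]; exact D.h_om (σ i)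
      h_t_notin := fun i => by
        simp only [Fin.coe_castSucc, hys_c i, hJs_c i]
        exact D.h_t_notin (σ i)
      h_t_adj := fun i => by
        simp only [Fin.coe_castSucc, hys_c i]
        exact D.h_t_adj (σ i)
      h_K_fin := fun i => by simp only [hK_tr i]; exact D.h_K_fin (σ i)
      h_Y := fun i => by
        simp only [Fin.val_succ, Fin.coe_castSucc]
        exact hYall i
      h_J_map := fun i => by
        simp only [Fin.coe_castSucc, Fin.val_succ, hJs_c i, hJs_s i]
        exact D.h_J_map (σ i)
      h_prod := huhat }, rfl, ?_, ?_⟩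
  · intro j
    exact ⟨rfl, hys_c j, hys_s j, hJs_c j, hJs_s j⟩
  · show D.Js (tauIdx σ (D.n - k)) = D.Js (Fin.last D.n)
    rw [hτneg (D.n - k) (lt_irrefl _)]


end CoxeterCentralizer
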